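/- Let L ⊂ ℝ^N be a lattice with vᵀw ∈ ℤ for all v,w ∈ L, let Γ ⊂ SL_N(ℝ) be a subgroup preserving the lattice 𝓛^∨ = L* ⊕ L* under the action ρ_γ(v,w) = (γv, γ^{-T}w), of finite index in the corresponding integral group. Then for any positive integer n, the set of Γ-orbits { 𝐯 ∈ Γ\𝓛^∨ : vᵀw = n } is finite. -/

import Mathlib

open Matrix

namespace FMO
variable {N : ℕ}

abbrev SLZ (N : ℕ) := Matrix.SpecialLinearGroup (Fin N) ℤ

def tSL (i j : Fin N) (h : i ≠ j) (c : ℤ) : SLZ N :=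
  ⟨transvection i j c, det_transvection_of_ne i j h c⟩

lemma tv_mulVec (i j : Fin N) (c : ℤ) (u : Fin N → ℤ) :
    (transvection i j c) *ᵥ u = Function.update u i (u i + c * u j) := by
  funext k
  rcases eq_or_ne k i with rfl | hk
  · simp [transvection, add_mulVec, single_mulVec, Function.update]
  · simp [transvection, add_mulVec, single_mulVec, Function.update, hk]

lemma tSL_inv (i j : Fin N) (h : i ≠ j) (c : ℤ) : (tSL i j h c)⁻¹ = tSL i j h (-c) := by
  rw [eq_comm, eq_inv_iff_mul_eq_one]
  apply Subtype.ext
  show transvection i j (-c) * transvection i j c = (1 : Matrix (Fin N) (Fin N) ℤ)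
  have h1 := transvection_mul_transvection_same i j h (-c) c
  rw [h1, neg_add_cancel, transvection_zero]

lemma tv_transpose (i j : Fin N) (c : ℤ) :
    (transvection i j c)ᵀ = transvection j i c := by
  simp [transvection, transpose_add, transpose_smul]

lemma tSL_fst (i j : Fin N) (h : i ≠ j) (c : ℤ) (u : Fin N → ℤ) :
    ((tSL i j h c : SLZ N) : Matrix (Fin N) (Fin N) ℤ) *ᵥ u
      = Function.update u i (u i + c * u j) := tv_mulVec i j c u

lemma tSL_snd (i j : Fin N) (h : i ≠ j) (c : ℤ) (z : Fin N → ℤ) :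
    (((tSL i j h c)⁻¹ : SLZ N) : Matrix (Fin N) (Fin N) ℤ)ᵀ *ᵥ z
      = Function.update z j (z j - c * z i) := by
  rw [tSL_inv]
  show (transvection i j (-c))ᵀ *ᵥ z = _
  rw [tv_transpose, tv_mulVec]
  simp [sub_eq_add_neg]

def Rel (M : SLZ N) (p q : (Fin N → ℤ) × (Fin N → ℤ)) : Prop :=
  q.1 = (M : Matrix (Fin N) (Fin N) ℤ) *ᵥ p.1 ∧
  q.2 = ((M⁻¹ : SLZ N) : Matrix (Fin N) (Fin N) ℤ)ᵀ *ᵥ p.2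

lemma Rel_one (p : (Fin N → ℤ) × (Fin N → ℤ)) : Rel 1 p p := by
  constructor <;> simp [Rel]

lemma Rel_comp {M M' : SLZ N} {p q r : (Fin N → ℤ) × (Fin N → ℤ)}
    (h1 : Rel M p q) (h2 : Rel M' q r) : Rel (M' * M) p r := by
  obtain ⟨a1, a2⟩ := h1; obtain ⟨b1, b2⟩ := h2
  constructor
  · rw [b1, a1, Matrix.SpecialLinearGroup.coe_mul, mulVec_mulVec]
  · rw [b2, a2, _root_.mul_inv_rev, Matrix.SpecialLinearGroup.coe_mul, transpose_mul, mulVec_mulVec]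

lemma Rel_dot {M : SLZ N} {p q : (Fin N → ℤ) × (Fin N → ℤ)} (h : Rel M p q) :
    q.1 ⬝ᵥ q.2 = p.1 ⬝ᵥ p.2 := by
  obtain ⟨a1, a2⟩ := h
  rw [a1, a2, dotProduct_mulVec, ← mulVec_transpose, transpose_transpose, mulVec_mulVec,
    ← Matrix.SpecialLinearGroup.coe_mul, inv_mul_cancel]
  simp


lemma coe_mul_mulVec (M' M : SLZ N) (u : Fin N → ℤ) :
    ((M' * M : SLZ N) : Matrix (Fin N) (Fin N) ℤ) *ᵥ u
      = (M' : Matrix (Fin N) (Fin N) ℤ) *ᵥ ((M : Matrix (Fin N) (Fin N) ℤ) *ᵥ u) := by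
  rw [Matrix.SpecialLinearGroup.coe_mul, mulVec_mulVec]

variable [NeZero N]

def mu (u : Fin N → ℤ) : ℕ := ∑ i ∈ Finset.univ.erase 0, (u i).natAbs

lemma mu_update_zero (u : Fin N → ℤ) (x : ℤ) : mu (Function.update u 0 x) = mu u := by
  unfold mu
  refine Finset.sum_congr rfl fun i hi => ?_
  rw [Function.update_of_ne (Finset.ne_of_mem_erase hi)]

lemma mu_update (u : Fin N → ℤ) (i : Fin N) (hi : i ≠ 0) (x : ℤ) :
    mu (Function.update u i x) + (u i).natAbs = mu u + x.natAbs := by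
  unfold mu
  have hmem : i ∈ Finset.univ.erase (0 : Fin N) := Finset.mem_erase.2 ⟨hi, Finset.mem_univ i⟩
  have h1 : (fun j => (Function.update u i x j).natAbs)
      = Function.update (fun j => (u j).natAbs) i x.natAbs := by
    funext j
    rcases eq_or_ne j i with rfl | hj
    · simp
    · simp [Function.update_of_ne hj]
  rw [h1, Finset.sum_update_of_mem hmem,
    Finset.sum_eq_add_sum_sdiff_singleton_of_mem hmem (fun j => (u j).natAbs)]
  omega

lemma euclid : ∀ (k : ℕ) (u : Fin N → ℤ), mu u ≤ k →
    ∃ M : SLZ N, ∀ i, i ≠ 0 → ((M : Matrix (Fin N) (Fin N) ℤ) *ᵥ u) i = 0 := by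
  intro k
  induction k with
  | zero =>
    intro u hu
    refine ⟨1, fun i hi => ?_⟩
    have hmem : i ∈ Finset.univ.erase (0 : Fin N) := Finset.mem_erase.2 ⟨hi, Finset.mem_univ i⟩
    have h0 : mu u = 0 := Nat.le_zero.1 hu
    have : (u i).natAbs = 0 := by
      unfold mu at h0
      exact (Finset.sum_eq_zero_iff.1 h0) i hmem
    have hui : u i = 0 := Int.natAbs_eq_zero.1 this
    simpa using hui
  | succ k ih =>
    intro u hu
    by_cases hz : ∀ i, i ≠ 0 → u i = 0
    · exact ⟨1, fun i hi => by simpa using hz i hi⟩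
    push_neg at hz
    obtain ⟨i, hi0, hune⟩ := hz
    have h0i : (0 : Fin N) ≠ i := Ne.symm hi0
    set r := u 0 % u i with hr_def
    set c1 := -(u 0 / u i) with hc1
    have key1 : u 0 + c1 * u i = r := by rw [hr_def, Int.emod_def]; ring
    set u1 := Function.update u 0 r with hu1def
    have act1 : ((tSL 0 i h0i c1 : SLZ N) : Matrix (Fin N) (Fin N) ℤ) *ᵥ u = u1 := by
      rw [tSL_fst, key1]
    have hmu1 : mu u1 = mu u := mu_update_zero u r
    have hu1i : u1 i = u i := Function.update_of_ne hi0 r u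
    have hu10 : u1 0 = r := Function.update_self 0 r u
    have habs : |u i| = ((u i).natAbs : ℤ) := Int.abs_eq_natAbs (u i)
    by_cases hr : r = 0
    · set u2 := Function.update u1 0 (u i) with hu2def
      have act2 : ((tSL 0 i h0i 1 : SLZ N) : Matrix (Fin N) (Fin N) ℤ) *ᵥ u1 = u2 := by
        rw [tSL_fst]
        rw [hu10, hr, hu1i]
        norm_num
        rfl
      have hu2i : u2 i = u i := by rw [hu2def, Function.update_of_ne hi0, hu1i]
      have hu20 : u2 0 = u i := Function.update_self 0 (u i) u1
      set u3 := Function.update u2 i 0 with hu3def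
      have act3 : ((tSL i 0 hi0 (-1) : SLZ N) : Matrix (Fin N) (Fin N) ℤ) *ᵥ u2 = u3 := by
        rw [tSL_fst]
        rw [hu2i, hu20]
        congr 1
        ring
      have hmu2 : mu u2 = mu u := by rw [hu2def, mu_update_zero, hmu1]
      have hmu3 : mu u3 + (u i).natAbs = mu u2 := by
        have := mu_update u2 i hi0 0
        rw [hu2i] at this
        simpa using this
      have hle : mu u3 ≤ k := by
        have hpos : 0 < (u i).natAbs := Int.natAbs_pos.2 hune
        omega
      obtain ⟨Mrec, hMrec⟩ := ih u3 hle
      refine ⟨Mrec * (tSL i 0 hi0 (-1) * (tSL 0 i h0i 1 * tSL 0 i h0i c1)), fun j hj => ?_⟩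
      rw [coe_mul_mulVec, coe_mul_mulVec, coe_mul_mulVec, act1, act2, act3]
      exact hMrec j hj
    · have hrpos : 0 < r := lt_of_le_of_ne (Int.emod_nonneg _ hune) (Ne.symm hr)
      have hrlt : r < |u i| := Int.emod_lt_abs _ hune
      set c2 := -(u1 i / r) with hc2
      have key2 : u1 i + c2 * u1 0 = u i % r := by
        rw [hc2, hu10, hu1i, Int.emod_def]; ring
      set u2 := Function.update u1 i (u i % r) with hu2def
      have act2 : ((tSL i 0 hi0 c2 : SLZ N) : Matrix (Fin N) (Fin N) ℤ) *ᵥ u1 = u2 := by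
        rw [tSL_fst, key2]
      have hmod1 : 0 ≤ u i % r := Int.emod_nonneg _ (ne_of_gt hrpos)
      have hmod2 : u i % r < r := Int.emod_lt_of_pos _ hrpos
      have hlt : (u i % r).natAbs < (u i).natAbs := by
        rw [habs] at hrlt
        omega
      have hmu2 : mu u2 + (u i).natAbs = mu u + (u i % r).natAbs := by
        have := mu_update u1 i hi0 (u i % r)
        rw [hu1i, hmu1] at this
        exact this
      have hle : mu u2 ≤ k := by omega
      obtain ⟨Mrec, hMrec⟩ := ih u2 hle
      refine ⟨Mrec * (tSL i 0 hi0 c2 * tSL 0 i h0i c1), fun j hj => ?_⟩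
      rw [coe_mul_mulVec, coe_mul_mulVec, act1, act2]
      exact hMrec j hj


def rho (M : SLZ N) (p : (Fin N → ℤ) × (Fin N → ℤ)) : (Fin N → ℤ) × (Fin N → ℤ) :=
  ((M : Matrix (Fin N) (Fin N) ℤ) *ᵥ p.1, ((M⁻¹ : SLZ N) : Matrix (Fin N) (Fin N) ℤ)ᵀ *ᵥ p.2)

lemma Rel_rho (M : SLZ N) (p : (Fin N → ℤ) × (Fin N → ℤ)) : Rel M p (rho M p) := ⟨rfl, rfl⟩

lemma stab_reduce (u z : Fin N → ℤ) (hu : ∀ j, j ≠ 0 → u j = 0) (c : Fin N → ℤ)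
    (s : Finset (Fin N)) (h0s : (0 : Fin N) ∉ s) :
    ∃ M : SLZ N, Rel M (u, z) (u, fun j => if j ∈ s then z j - c j * z 0 else z j) := by
  induction s using Finset.induction_on with
  | empty =>
    refine ⟨1, ?_⟩
    have : (fun j => if j ∈ (∅ : Finset (Fin N)) then z j - c j * z 0 else z j) = z := by
      funext j; simp
    rw [this]
    exact Rel_one (u, z)
  | @insert j s hj ih =>
    have hj0 : j ≠ 0 := fun h => h0s (by simp [h])
    have h0s' : (0 : Fin N) ∉ s := fun h => h0s (Finset.mem_insert_of_mem h)
    obtain ⟨M, hM⟩ := ih h0s'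
    set z1 := (fun k => if k ∈ s then z k - c k * z 0 else z k) with hz1
    have h0j : (0 : Fin N) ≠ j := Ne.symm hj0
    refine ⟨tSL 0 j h0j (c j) * M, Rel_comp hM ⟨?_, ?_⟩⟩
    · rw [tSL_fst]
      have : u 0 + c j * u j = u 0 := by rw [hu j hj0]; ring
      rw [this, Function.update_eq_self]
    · rw [tSL_snd]
      funext k
      rcases eq_or_ne k j with rfl | hk
      · rw [Function.update_self]
        have h1 : z1 k = z k := by rw [hz1]; simp [hj]
        have h2 : z1 0 = z 0 := by rw [hz1]; simp [h0s']
        simp [h1, h2]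
      · rw [Function.update_of_ne hk]
        rw [hz1]
        simp only [Finset.mem_insert]
        rcases eq_or_ne k 0 with rfl | hk0
        · simp [h0s', h0j]
        · by_cases hks : k ∈ s <;> simp [hks, hk]

lemma box_reps (m : ℤ) (hm : 0 < m) (u z : Fin N → ℤ) (h : u ⬝ᵥ z = m) :
    ∃ M : SLZ N, ∃ p : (Fin N → ℤ) × (Fin N → ℤ), Rel M (u, z) p ∧
      (∀ i, |p.1 i| ≤ m ∧ |p.2 i| ≤ m) := by
  obtain ⟨M0, hM0⟩ := euclid (mu u) u le_rfl
  set u' := (M0 : Matrix (Fin N) (Fin N) ℤ) *ᵥ u with hu'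
  set z' := ((M0⁻¹ : SLZ N) : Matrix (Fin N) (Fin N) ℤ)ᵀ *ᵥ z with hz'
  have hrel0 : Rel M0 (u, z) (u', z') := ⟨rfl, rfl⟩
  have hdot' : u' ⬝ᵥ z' = m := by rw [Rel_dot hrel0]; exact h
  have hsingle : u' 0 * z' 0 = m := by
    rw [← hdot']
    rw [dotProduct]
    rw [Finset.sum_eq_single_of_mem 0 (Finset.mem_univ 0)]
    intro b _ hb
    rw [hM0 b hb, zero_mul]
  have hu'0 : u' 0 ≠ 0 := fun h0 => by simp [h0] at hsingle; omega
  have hz'0 : z' 0 ≠ 0 := fun h0 => by simp [h0] at hsingle; omega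
  have habs_u : |u' 0| ≤ m := by
    refine Int.le_of_dvd hm ?_
    exact (abs_dvd _ _).2 ⟨z' 0, hsingle.symm⟩
  have habs_z : |z' 0| ≤ m := by
    refine Int.le_of_dvd hm ?_
    exact (abs_dvd _ _).2 ⟨u' 0, by rw [mul_comm]; exact hsingle.symm⟩
  obtain ⟨M1, hM1⟩ := stab_reduce u' z' hM0 (fun j => z' j / z' 0)
    (Finset.univ.erase 0) (by simp)
  set z'' := (fun j => if j ∈ Finset.univ.erase (0:Fin N) then z' j - (z' j / z' 0) * z' 0 else z' j)
    with hz''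
  refine ⟨M1 * M0, (u', z''), Rel_comp hrel0 hM1, fun i => ?_⟩
  dsimp only
  constructor
  · rcases eq_or_ne i 0 with rfl | hi
    · exact habs_u
    · rw [hM0 i hi]
      simpa using le_of_lt hm
  · rcases eq_or_ne i 0 with rfl | hi
    · have : z'' 0 = z' 0 := by rw [hz'']; simp
      rw [this]; exact habs_z
    · have hmem : i ∈ Finset.univ.erase (0 : Fin N) := Finset.mem_erase.2 ⟨hi, Finset.mem_univ i⟩
      have hzi : z'' i = z' i % z' 0 := by
        rw [hz'']
        simp only [hmem, if_pos]
        rw [Int.emod_def]; ring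
      rw [hzi]
      have h1 : 0 ≤ z' i % z' 0 := Int.emod_nonneg _ hz'0
      have h2 : z' i % z' 0 < |z' 0| := Int.emod_lt_abs _ hz'0
      rw [abs_of_nonneg h1]
      exact le_trans (le_of_lt h2) habs_z


def Kd (N d : ℕ) : Subgroup (SLZ N) :=
  (Matrix.SpecialLinearGroup.map (n := Fin N) (Int.castRingHom (ZMod d))).ker

lemma Kd_entries {d : ℕ} {M : SLZ N} (hM : M ∈ Kd N d) (i j : Fin N) :
    (d : ℤ) ∣ ((M : Matrix (Fin N) (Fin N) ℤ) i j - (1 : Matrix (Fin N) (Fin N) ℤ) i j) := by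
  have h1 : Matrix.SpecialLinearGroup.map (n := Fin N) (Int.castRingHom (ZMod d)) M = 1 := hM
  have h2 : ((M : Matrix (Fin N) (Fin N) ℤ)).map (Int.castRingHom (ZMod d))
      = (1 : Matrix (Fin N) (Fin N) (ZMod d)) := by
    have := congrArg (Subtype.val) h1
    simpa [Matrix.SpecialLinearGroup.map_apply_coe, RingHom.mapMatrix_apply] using this
  have h3 : (((M : Matrix (Fin N) (Fin N) ℤ) i j : ℤ) : ZMod d)
      = ((1 : Matrix (Fin N) (Fin N) ℤ) i j : ZMod d) := by
    have := congrFun (congrFun h2 i) j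
    rcases eq_or_ne i j with rfl | hij
    · simpa [Matrix.one_apply] using this
    · simpa [Matrix.one_apply, hij] using this
  rw [← ZMod.intCast_zmod_eq_zero_iff_dvd]
  push_cast
  rw [sub_eq_zero]
  exact_mod_cast h3

lemma key_reps (m : ℤ) (hm : 0 < m) (d : ℕ) (hd : 0 < d) :
    ∃ R : Finset ((Fin N → ℤ) × (Fin N → ℤ)),
      ∀ u z : Fin N → ℤ, u ⬝ᵥ z = m →
        ∃ M : SLZ N, M ∈ Kd N d ∧ ∃ p ∈ R, Rel M (u, z) p := by
  classical
  haveI : NeZero d := ⟨hd.ne'⟩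
  haveI : Finite (SLZ N ⧸ Kd N d) := by
    exact Finite.of_equiv _
      (QuotientGroup.quotientKerEquivRange
        (Matrix.SpecialLinearGroup.map (n := Fin N) (Int.castRingHom (ZMod d)))).symm.toEquiv
  haveI : Fintype (SLZ N ⧸ Kd N d) := Fintype.ofFinite _
  set Treps : Finset (SLZ N) :=
    Finset.univ.image (fun q : SLZ N ⧸ Kd N d => Quotient.out q) with hTreps
  set B : Finset ((Fin N → ℤ) × (Fin N → ℤ)) :=
    (Fintype.piFinset fun _ => Finset.Icc (-m) m) ×ˢ
    (Fintype.piFinset fun _ => Finset.Icc (-m) m) with hB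
  refine ⟨Finset.image (fun tp : SLZ N × ((Fin N → ℤ) × (Fin N → ℤ)) => rho tp.1⁻¹ tp.2)
    (Treps ×ˢ B), fun u z h => ?_⟩
  obtain ⟨M, p, hrel, hbound⟩ := box_reps m hm u z h
  have hpB : p ∈ B := by
    rw [hB, Finset.mem_product]
    constructor
    · rw [Fintype.mem_piFinset]
      intro i
      rw [Finset.mem_Icc, ← abs_le]
      exact (hbound i).1
    · rw [Fintype.mem_piFinset]
      intro i
      rw [Finset.mem_Icc, ← abs_le]
      exact (hbound i).2
  set t : SLZ N := Quotient.out ((M : SLZ N ⧸ Kd N d)) with ht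
  have htT : t ∈ Treps := Finset.mem_image.2 ⟨_, Finset.mem_univ _, rfl⟩
  obtain ⟨k, hk⟩ := QuotientGroup.mk_out_eq_mul (Kd N d) M
  have hdelta : t⁻¹ * M ∈ Kd N d := by
    rw [ht, hk]
    simpa using (Kd N d).inv_mem k.2
  refine ⟨t⁻¹ * M, hdelta, rho t⁻¹ p, ?_, Rel_comp hrel (Rel_rho t⁻¹ p)⟩
  exact Finset.mem_image.2 ⟨(t, p), Finset.mem_product.2 ⟨htT, hpB⟩, rfl⟩


def cV (x : Fin N → ℤ) : Fin N → ℝ := fun i => (x i : ℝ)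

def cM (B : Matrix (Fin N) (Fin N) ℤ) : Matrix (Fin N) (Fin N) ℝ :=
  B.map (Int.castRingHom ℝ)

lemma cV_mulVec (B : Matrix (Fin N) (Fin N) ℤ) (x : Fin N → ℤ) :
    cV (B *ᵥ x) = cM B *ᵥ cV x := by
  funext i
  simp only [cV, cM, mulVec, dotProduct, Matrix.map_apply, Int.coe_castRingHom]
  push_cast
  rfl

lemma cV_dot (u z : Fin N → ℤ) : ((u ⬝ᵥ z : ℤ) : ℝ) = cV u ⬝ᵥ cV z := by
  simp only [cV, dotProduct]
  push_cast
  rfl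

lemma cM_mul (B C : Matrix (Fin N) (Fin N) ℤ) : cM (B * C) = cM B * cM C :=
  Matrix.map_mul

lemma cM_one : cM (1 : Matrix (Fin N) (Fin N) ℤ) = 1 :=
  Matrix.map_one _ (map_zero _) (map_one _)

lemma cM_smul (d : ℤ) (K : Matrix (Fin N) (Fin N) ℤ) : cM (d • K) = (d : ℝ) • cM K := by
  funext i j
  have h : (d • K) i j = d * K i j := rfl
  simp only [cM, Matrix.map_apply, h, Matrix.smul_apply, smul_eq_mul, Int.coe_castRingHom]
  push_cast
  ring

lemma cM_transpose (B : Matrix (Fin N) (Fin N) ℤ) : cM Bᵀ = (cM B)ᵀ := rfl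

lemma cM_adjugate (B : Matrix (Fin N) (Fin N) ℤ) : cM B.adjugate = (cM B).adjugate := by
  have := RingHom.map_adjugate (Int.castRingHom ℝ) B
  simpa [RingHom.mapMatrix_apply, cM] using this

lemma cM_det (B : Matrix (Fin N) (Fin N) ℤ) : (cM B).det = ((B.det : ℤ) : ℝ) := by
  have := RingHom.map_det (Int.castRingHom ℝ) B
  simpa [RingHom.mapMatrix_apply, cM] using this.symm

lemma int_entries_mulVec (B : Matrix (Fin N) (Fin N) ℤ) (x : Fin N → ℝ)
    (hx : ∀ i, ∃ k : ℤ, x i = k) (i : Fin N) : ∃ k : ℤ, (cM B *ᵥ x) i = k := by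
  choose k hk using hx
  have hxk : x = cV k := funext hk
  exact ⟨(B *ᵥ k) i, by rw [hxk, ← cV_mulVec]; rfl⟩

lemma SL_coe_inv (S : Matrix.SpecialLinearGroup (Fin N) ℝ) :
    ((S : Matrix (Fin N) (Fin N) ℝ))⁻¹ = ((S⁻¹ : Matrix.SpecialLinearGroup (Fin N) ℝ) : Matrix (Fin N) (Fin N) ℝ) := by
  apply Matrix.inv_eq_right_inv
  rw [← Matrix.SpecialLinearGroup.coe_mul, mul_inv_cancel, Matrix.SpecialLinearGroup.coe_one]

end FMO

open FMO in
/-- Finiteness of the set of `Γ`-orbits of vectors `𝐯 = (v,w) ∈ L* ⊕ L*` with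
`vᵀw = n > 0`, for `Γ ⊂ SL_N(ℝ)` preserving `L* ⊕ L*` under
`ρ_γ(v,w) = (γv, γ^{-T}w)` and of finite index in the full group of such
elements. -/
theorem finitely_many_orbits (N : ℕ) (α : Fin N → (Fin N → ℝ))
    (hα : LinearIndependent ℝ α)
    (hint : ∀ i j, ∃ k : ℤ, α i ⬝ᵥ α j = (k : ℝ))
    (Lstar : Set (Fin N → ℝ))
    (hLstar : Lstar = {x | ∀ i, ∃ k : ℤ, x ⬝ᵥ α i = (k : ℝ)})
    (Γ : Subgroup (Matrix.SpecialLinearGroup (Fin N) ℝ))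
    (hpres : ∀ γ ∈ Γ, ∀ v ∈ Lstar, ∀ w ∈ Lstar,
      (γ : Matrix (Fin N) (Fin N) ℝ).mulVec v ∈ Lstar ∧
      ((γ : Matrix (Fin N) (Fin N) ℝ)⁻¹)ᵀ.mulVec w ∈ Lstar)
    (hfin : ∃ T : Finset (Matrix.SpecialLinearGroup (Fin N) ℝ),
      ∀ γ : Matrix.SpecialLinearGroup (Fin N) ℝ,
        (∀ v ∈ Lstar, ∀ w ∈ Lstar,
          (γ : Matrix (Fin N) (Fin N) ℝ).mulVec v ∈ Lstar ∧
          ((γ : Matrix (Fin N) (Fin N) ℝ)⁻¹)ᵀ.mulVec w ∈ Lstar) →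
        ∃ t ∈ T, ∃ δ ∈ Γ, γ = t * δ)
    (n : ℕ) (hn : 0 < n) :
    ∃ F : Finset ((Fin N → ℝ) × (Fin N → ℝ)),
      ∀ v ∈ Lstar, ∀ w ∈ Lstar, v ⬝ᵥ w = (n : ℝ) →
        ∃ q ∈ F, ∃ γ ∈ Γ,
          q.1 = (γ : Matrix (Fin N) (Fin N) ℝ).mulVec v ∧
          q.2 = ((γ : Matrix (Fin N) (Fin N) ℝ)⁻¹)ᵀ.mulVec w := by
  classical
  rcases Nat.eq_zero_or_pos N with hN | hN
  · subst hN
    refine ⟨∅, fun v _ w _ hvw => absurd hvw ?_⟩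
    have h0 : v ⬝ᵥ w = 0 := by simp [dotProduct]
    rw [h0]
    intro h
    have : (n : ℝ) ≠ 0 := by positivity
    exact this h.symm
  haveI : NeZero N := ⟨hN.ne'⟩
  obtain ⟨T, hT⟩ := hfin
  set A : Matrix (Fin N) (Fin N) ℝ := Matrix.of α with hA
  have hAunit : IsUnit A := Matrix.linearIndependent_rows_iff_isUnit.1 hα
  have hAdet : IsUnit A.det := (Matrix.isUnit_iff_isUnit_det A).1 hAunit
  have hAT : IsUnit Aᵀ.det := by rwa [Matrix.det_transpose]
  have hAinv : A⁻¹ * A = 1 := Matrix.nonsing_inv_mul A hAdet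
  have hAinv' : A * A⁻¹ = 1 := Matrix.mul_nonsing_inv A hAdet
  have hATinv : Aᵀ * (Aᵀ)⁻¹ = 1 := Matrix.mul_nonsing_inv _ hAT
  have hATinv' : (Aᵀ)⁻¹ * Aᵀ = 1 := Matrix.nonsing_inv_mul _ hAT
  -- membership characterization
  have hLmem : ∀ x : Fin N → ℝ, x ∈ Lstar ↔ ∀ i, ∃ k : ℤ, (A *ᵥ x) i = k := by
    intro x
    rw [hLstar]
    constructor <;> intro h i <;> obtain ⟨k, hk⟩ := h i <;> refine ⟨k, ?_⟩ <;>
      rw [show (A *ᵥ x) i = x ⬝ᵥ α i from by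
        simp only [mulVec, hA]
        exact dotProduct_comm _ _] at * <;> exact hk
  -- Gram matrix
  choose Gf hGf using hint
  set GZ : Matrix (Fin N) (Fin N) ℤ := Matrix.of Gf with hGZ
  have hGcast : cM GZ = A * Aᵀ := by
    funext i j
    simp only [cM, Matrix.map_apply, Matrix.mul_apply, hGZ, hA, Matrix.of_apply,
      Matrix.transpose_apply, Int.coe_castRingHom]
    rw [← hGf i j]
    rfl
  set d : ℤ := GZ.det with hd
  have hdreal : (d : ℝ) = A.det * A.det := by
    rw [hd, ← cM_det, hGcast, Matrix.det_mul, Matrix.det_transpose]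
  have hdetne : A.det ≠ 0 := hAdet.ne_zero
  have hdrealpos : (0:ℝ) < (d:ℝ) := by
    rw [hdreal]
    exact mul_self_pos.2 hdetne
  have hdpos : 0 < d := by exact_mod_cast hdrealpos
  have hdne : (d : ℝ) ≠ 0 := ne_of_gt hdrealpos
  set m : ℤ := d * n with hm
  have hmpos : 0 < m := by
    have : (0:ℤ) < n := by exact_mod_cast hn
    exact mul_pos hdpos this
  set dn : ℕ := d.toNat with hdn
  have hdn' : (dn : ℤ) = d := Int.toNat_of_nonneg hdpos.le
  have hdnpos : 0 < dn := by omega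
  obtain ⟨R, hR⟩ := FMO.key_reps (N := N) m hmpos dn hdnpos
  set Ψ : ((Fin N → ℤ) × (Fin N → ℤ)) → ((Fin N → ℝ) × (Fin N → ℝ)) :=
    fun p => (A⁻¹ *ᵥ cV p.1, Aᵀ *ᵥ (((d:ℝ))⁻¹ • cV p.2)) with hΨ
  refine ⟨Finset.image (fun tp : Matrix.SpecialLinearGroup (Fin N) ℝ ×
      ((Fin N → ℤ) × (Fin N → ℤ)) =>
      (((tp.1⁻¹ : Matrix.SpecialLinearGroup (Fin N) ℝ) : Matrix (Fin N) (Fin N) ℝ) *ᵥ (Ψ tp.2).1,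
       ((tp.1 : Matrix.SpecialLinearGroup (Fin N) ℝ) : Matrix (Fin N) (Fin N) ℝ)ᵀ *ᵥ (Ψ tp.2).2))
      (T ×ˢ R), ?_⟩
  intro v hv w hw hvw
  -- integer coordinates
  choose uf huf using (hLmem v).1 hv
  choose wf hwf using (hLmem w).1 hw
  have hcu : cV uf = A *ᵥ v := funext fun i => (huf i).symm
  have hcw : cV wf = A *ᵥ w := funext fun i => (hwf i).symm
  set z : Fin N → ℤ := GZ.adjugate *ᵥ wf with hz
  have fact3 : (cM GZ.adjugate) * A = (d:ℝ) • (Aᵀ)⁻¹ := by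
    rw [cM_adjugate, hGcast]
    have h1 : (A * Aᵀ).adjugate * (A * Aᵀ) = (A * Aᵀ).det • 1 := Matrix.adjugate_mul _
    have h2 : A = (A * Aᵀ) * (Aᵀ)⁻¹ := by
      rw [Matrix.mul_assoc, hATinv, Matrix.mul_one]
    calc (A * Aᵀ).adjugate * A = (A * Aᵀ).adjugate * ((A * Aᵀ) * (Aᵀ)⁻¹) := by rw [← h2]
      _ = ((A * Aᵀ).adjugate * (A * Aᵀ)) * (Aᵀ)⁻¹ := (Matrix.mul_assoc _ _ _).symm
      _ = ((A * Aᵀ).det • (1 : Matrix (Fin N) (Fin N) ℝ)) * (Aᵀ)⁻¹ := by rw [h1]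
      _ = (d:ℝ) • (Aᵀ)⁻¹ := by
          rw [Matrix.smul_mul, Matrix.one_mul, ← hGcast, cM_det, hd]
  have hcz : cV z = (d:ℝ) • ((Aᵀ)⁻¹ *ᵥ w) := by
    rw [hz, cV_mulVec, hcw, mulVec_mulVec, fact3, Matrix.smul_mulVec]
  have hdot : uf ⬝ᵥ z = m := by
    have hcast : ((uf ⬝ᵥ z : ℤ) : ℝ) = ((m : ℤ) : ℝ) := by
      rw [cV_dot, hcu, hcz]
      rw [dotProduct_smul]
      have h3 : (A *ᵥ v) ⬝ᵥ ((Aᵀ)⁻¹ *ᵥ w) = v ⬝ᵥ w := by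
        rw [dotProduct_mulVec, ← Matrix.mulVec_transpose, ← Matrix.transpose_nonsing_inv,
          Matrix.transpose_transpose, mulVec_mulVec, hAinv, Matrix.one_mulVec]
      rw [h3, hvw, hm, smul_eq_mul]
      push_cast
      ring
    exact_mod_cast hcast
  obtain ⟨M, hMK, p, hpR, hrel⟩ := hR uf z hdot
  -- the real group element
  set Mc : Matrix (Fin N) (Fin N) ℝ := cM (M : Matrix (Fin N) (Fin N) ℤ) with hMc
  have hMcdet : Mc.det = 1 := by
    rw [hMc, cM_det, M.2]
    norm_num
  set g : Matrix (Fin N) (Fin N) ℝ := A⁻¹ * Mc * A with hg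
  have hgdet : g.det = 1 := by
    rw [hg, Matrix.det_mul, Matrix.det_mul, hMcdet, mul_one, ← Matrix.det_mul, hAinv,
      Matrix.det_one]
  set γh : Matrix.SpecialLinearGroup (Fin N) ℝ := ⟨g, hgdet⟩ with hγh
  have hMcinv : Mc⁻¹ = cM ((M⁻¹ : FMO.SLZ N) : Matrix (Fin N) (Fin N) ℤ) := by
    apply Matrix.inv_eq_right_inv
    rw [hMc, ← cM_mul, ← Matrix.SpecialLinearGroup.coe_mul, mul_inv_cancel,
      Matrix.SpecialLinearGroup.coe_one, cM_one]
  have hginv : g⁻¹ = A⁻¹ * (Mc⁻¹ * A) := by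
    rw [hg, Matrix.mul_inv_rev, Matrix.mul_inv_rev,
      Matrix.nonsing_inv_nonsing_inv A hAdet]
  set B : Matrix (Fin N) (Fin N) ℤ := ((M⁻¹ : FMO.SLZ N) : Matrix (Fin N) (Fin N) ℤ) with hB
  have hBd : ∀ i j, ((dn:ℕ):ℤ) ∣ (B i j - (1 : Matrix (Fin N) (Fin N) ℤ) i j) :=
    fun i j => FMO.Kd_entries (inv_mem hMK) i j
  set Km : Matrix (Fin N) (Fin N) ℤ :=
    Matrix.of (fun i j => (Bᵀ i j - (1 : Matrix (Fin N) (Fin N) ℤ) i j) / d) with hKm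
  have hBT : Bᵀ = 1 + d • Km := by
    funext i j
    have h4 : (d:ℤ) ∣ (Bᵀ i j - (1 : Matrix (Fin N) (Fin N) ℤ) i j) := by
      have := hBd j i
      rw [hdn'] at this
      have h1ij : (1 : Matrix (Fin N) (Fin N) ℤ) j i = (1 : Matrix (Fin N) (Fin N) ℤ) i j := by
        simp [Matrix.one_apply, eq_comm]
      rw [h1ij] at this
      exact this
    have h5 : (1 + d • Km) i j
        = (1 : Matrix (Fin N) (Fin N) ℤ) i j + d * Km i j := rfl
    rw [h5, hKm]
    simp only [Matrix.of_apply]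
    rw [Int.mul_ediv_cancel' h4]
    ring
  set Q : Matrix (Fin N) (Fin N) ℤ := 1 + GZ * Km * GZ.adjugate with hQ
  have hQG : GZ * Bᵀ = Q * GZ := by
    rw [hBT, hQ]
    have h2 : GZ.adjugate * GZ = d • 1 := by rw [Matrix.adjugate_mul, hd]
    rw [Matrix.mul_add, Matrix.add_mul, Matrix.mul_one, Matrix.one_mul]
    congr 1
    rw [Matrix.mul_smul, Matrix.mul_assoc, h2, Matrix.mul_smul, Matrix.mul_one]
  have hMcinvT : (Mc⁻¹)ᵀ = cM Bᵀ := by rw [hMcinv, cM_transpose, hB]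
  have hginvT : (g⁻¹)ᵀ = Aᵀ * (cM Bᵀ * (Aᵀ)⁻¹) := by
    rw [hginv, Matrix.transpose_mul, Matrix.transpose_mul, hMcinvT,
      Matrix.transpose_nonsing_inv, Matrix.mul_assoc]
  have hkey : A * (g⁻¹)ᵀ = cM Q * A := by
    rw [hginvT]
    have e1 : A * (Aᵀ * (cM Bᵀ * (Aᵀ)⁻¹)) = (A * Aᵀ) * cM Bᵀ * (Aᵀ)⁻¹ := by
      rw [Matrix.mul_assoc, Matrix.mul_assoc]
    rw [e1, ← hGcast, ← cM_mul, hQG, cM_mul, hGcast]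
    calc cM Q * (A * Aᵀ) * (Aᵀ)⁻¹ = cM Q * (A * (Aᵀ * (Aᵀ)⁻¹)) := by
          rw [Matrix.mul_assoc, Matrix.mul_assoc]
      _ = cM Q * A := by rw [hATinv, Matrix.mul_one]
  -- γh satisfies the preservation property
  have hball : ∀ v' ∈ Lstar, ∀ w' ∈ Lstar,
      (γh : Matrix (Fin N) (Fin N) ℝ).mulVec v' ∈ Lstar ∧
      ((γh : Matrix (Fin N) (Fin N) ℝ)⁻¹)ᵀ.mulVec w' ∈ Lstar := by
    intro v' hv' w' hw'
    constructor
    · rw [hLmem]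
      intro i
      have hAg : A * g = Mc * A := by
        rw [hg, ← Matrix.mul_assoc, ← Matrix.mul_assoc, hAinv', Matrix.one_mul]
      have : A *ᵥ (g *ᵥ v') = Mc *ᵥ (A *ᵥ v') := by
        rw [mulVec_mulVec, mulVec_mulVec, hAg]
      rw [show ((γh : Matrix (Fin N) (Fin N) ℝ)).mulVec v' = g *ᵥ v' from rfl, this]
      exact int_entries_mulVec _ _ ((hLmem v').1 hv') i
    · rw [hLmem]
      intro i
      have : A *ᵥ ((g⁻¹)ᵀ *ᵥ w') = cM Q *ᵥ (A *ᵥ w') := by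
        rw [mulVec_mulVec, mulVec_mulVec, hkey]
      rw [show (((γh : Matrix (Fin N) (Fin N) ℝ))⁻¹)ᵀ.mulVec w' = (g⁻¹)ᵀ *ᵥ w' from rfl, this]
      exact int_entries_mulVec _ _ ((hLmem w').1 hw') i
  obtain ⟨t, htT, δ, hδΓ, hfact⟩ := hT γh hball
  have hδeq : δ = t⁻¹ * γh := by rw [hfact]; group
  have hgv : g *ᵥ v = A⁻¹ *ᵥ cV p.1 := by
    rw [hrel.1, cV_mulVec, hg]
    rw [← mulVec_mulVec, ← mulVec_mulVec, hcu]
  have hgw : (g⁻¹)ᵀ *ᵥ w = Aᵀ *ᵥ (((d:ℝ))⁻¹ • cV p.2) := by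
    have hATw : (Aᵀ)⁻¹ *ᵥ w = ((d:ℝ))⁻¹ • cV z := by
      rw [hcz, smul_smul, inv_mul_cancel₀ hdne, one_smul]
    rw [hginvT, ← mulVec_mulVec, ← mulVec_mulVec, hATw]
    congr 1
    rw [Matrix.mulVec_smul, ← cV_mulVec, ← hrel.2]
  refine ⟨_, Finset.mem_image.2 ⟨(t, p), Finset.mem_product.2 ⟨htT, hpR⟩, rfl⟩, δ, hδΓ, ?_, ?_⟩
  · show ((t⁻¹ : Matrix.SpecialLinearGroup (Fin N) ℝ) : Matrix (Fin N) (Fin N) ℝ) *ᵥ (Ψ p).1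
      = (δ : Matrix (Fin N) (Fin N) ℝ).mulVec v
    rw [hδeq, Matrix.SpecialLinearGroup.coe_mul]
    rw [show ((γh : Matrix (Fin N) (Fin N) ℝ)) = g from rfl]
    rw [← mulVec_mulVec, hgv]
  · show ((t : Matrix.SpecialLinearGroup (Fin N) ℝ) : Matrix (Fin N) (Fin N) ℝ)ᵀ *ᵥ (Ψ p).2
      = (((δ : Matrix (Fin N) (Fin N) ℝ))⁻¹)ᵀ.mulVec w
    rw [SL_coe_inv δ]
    have hδinv : δ⁻¹ = γh⁻¹ * t := by rw [hδeq]; group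
    rw [hδinv, Matrix.SpecialLinearGroup.coe_mul, Matrix.transpose_mul]
    rw [← SL_coe_inv γh]
    rw [show ((γh : Matrix (Fin N) (Fin N) ℝ)) = g from rfl]
    rw [← mulVec_mulVec, hgw]
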